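/- Let F be continuously differentiable on [0,1] with F'(0) \ge 0, F'(1) \le 0, and F' decreasing. Then for every \epsilon > 0 there exist n \ge 2 and coefficients a_0, ..., a_n satisfying a_1 - a_0 > 0, a_n - a_{n-1} < 0, and a_{i+1} + a_{i-1} \le 2 a_i for i = 1, ..., n-1, such that \|F_a - F\|_\infty + \|F_a' - F'\|_\infty < \epsilon. -/

import Mathlib

open Finset Set

lemma nat_key1 {n i : ℕ} (hn : 1 ≤ n) : (i+1) * n.choose (i+1) = n * (n-1).choose i := by
  have h := Nat.add_one_mul_choose_eq (n-1) i
  rw [Nat.sub_add_cancel hn] at h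
  rw [mul_comm]; exact h.symm

lemma nat_key2 {n i : ℕ} (hn : 1 ≤ n) : (n - i) * n.choose i = n * (n-1).choose i := by
  calc (n - i) * n.choose i = n.choose i * (n - i) := mul_comm _ _
    _ = n.choose (i+1) * (i+1) := (Nat.choose_succ_right_eq n i).symm
    _ = (i+1) * n.choose (i+1) := mul_comm _ _
    _ = n * (n-1).choose i := nat_key1 hn

lemma bern_hasDerivAt (n : ℕ) (hn : 1 ≤ n) (a : ℕ → ℝ) (t : ℝ) :
    HasDerivAt (fun s : ℝ => ∑ i ∈ Finset.range (n+1),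
        a i * (n.choose i : ℝ) * s ^ i * (1 - s) ^ (n - i))
      (∑ i ∈ Finset.range n,
        (n : ℝ) * (a (i+1) - a i) * ((n-1).choose i : ℝ) * t ^ i * (1 - t) ^ (n - 1 - i)) t := by
  set A : ℕ → ℝ := fun i => a i * (n.choose i : ℝ) * ((i:ℝ) * t ^ (i-1)) * (1 - t) ^ (n - i) with hAdef
  set B : ℕ → ℝ := fun i => a i * (n.choose i : ℝ) * t ^ i * ((((n-i):ℕ):ℝ) * (1 - t) ^ (n - i - 1) * (-1)) with hBdef
  have key : ∀ i ∈ Finset.range (n+1), HasDerivAt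
      (fun s : ℝ => a i * (n.choose i : ℝ) * s ^ i * (1 - s) ^ (n - i)) (A i + B i) t := by
    intro i _
    have h1 : HasDerivAt (fun s : ℝ => a i * (n.choose i : ℝ) * s ^ i)
        (a i * (n.choose i : ℝ) * ((i:ℝ) * t ^ (i-1))) t :=
      (hasDerivAt_pow i t).const_mul _
    have h2 : HasDerivAt (fun s : ℝ => (1 - s) ^ (n - i))
        ((((n-i):ℕ):ℝ) * (1 - t) ^ (n - i - 1) * (-1)) t := by
      have := ((hasDerivAt_id t).const_sub 1).fun_pow (n - i)
      simpa using this
    exact h1.mul h2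
  have hsum := HasDerivAt.fun_sum key
  have heq : (∑ i ∈ Finset.range (n+1), (A i + B i)) =
      ∑ i ∈ Finset.range n,
        (n : ℝ) * (a (i+1) - a i) * ((n-1).choose i : ℝ) * t ^ i * (1 - t) ^ (n - 1 - i) := by
    rw [Finset.sum_add_distrib]
    have hA : (∑ i ∈ Finset.range (n+1), A i) = ∑ i ∈ Finset.range n, A (i+1) := by
      rw [Finset.sum_range_succ']; simp [hAdef]
    have hB : (∑ i ∈ Finset.range (n+1), B i) = ∑ i ∈ Finset.range n, B i := by
      rw [Finset.sum_range_succ]; simp [hBdef]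
    rw [hA, hB, ← Finset.sum_add_distrib]
    apply Finset.sum_congr rfl
    intro i hi
    have hi' : i < n := Finset.mem_range.mp hi
    have e1 : n - (i+1) = n - 1 - i := by omega
    have e2 : n - i - 1 = n - 1 - i := by omega
    have c1 : (((i+1) : ℕ):ℝ) * ((n.choose (i+1)) : ℝ) = (n:ℝ) * (((n-1).choose i : ℕ):ℝ) := by
      exact_mod_cast congrArg (Nat.cast : ℕ → ℝ) (nat_key1 hn)
    have c2 : (((n-i) : ℕ):ℝ) * ((n.choose i) : ℝ) = (n:ℝ) * (((n-1).choose i : ℕ):ℝ) := by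
      exact_mod_cast congrArg (Nat.cast : ℕ → ℝ) (nat_key2 hn)
    simp only [hAdef, hBdef, e1, e2, Nat.add_sub_cancel]
    linear_combination (a (i+1) * t^i * (1-t)^(n-1-i)) * c1 - (a i * t^i * (1-t)^(n-1-i)) * c2
  rw [heq] at hsum
  exact hsum

lemma basis_nonneg (m i : ℕ) (x : ↥unitInterval) :
    0 ≤ (m.choose i : ℝ) * (x:ℝ)^i * (1-(x:ℝ))^(m-i) := by
  have := @bernstein_nonneg m i x
  rwa [bernstein_apply] at this

lemma basis_sum (m : ℕ) (x : ↥unitInterval) :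
    ∑ i ∈ Finset.range (m+1), (m.choose i : ℝ) * (x:ℝ)^i * (1-(x:ℝ))^(m-i) = 1 := by
  have h := bernstein.probability m x
  rw [Fin.sum_univ_eq_sum_range (fun k => bernstein m k x)] at h
  simp only [bernstein_apply] at h
  exact h

lemma cmp_sum (m : ℕ) (x : ↥unitInterval) (c d : ℕ → ℝ) (M : ℝ)
    (h : ∀ i ∈ Finset.range (m+1), |c i - d i| ≤ M) :
    |(∑ i ∈ Finset.range (m+1), c i * ((m.choose i : ℝ) * (x:ℝ)^i * (1-(x:ℝ))^(m-i))) -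
     (∑ i ∈ Finset.range (m+1), d i * ((m.choose i : ℝ) * (x:ℝ)^i * (1-(x:ℝ))^(m-i)))| ≤ M := by
  rw [← Finset.sum_sub_distrib]
  refine (Finset.abs_sum_le_sum_abs _ _).trans ?_
  have hb : ∀ i ∈ Finset.range (m+1),
      |c i * ((m.choose i : ℝ) * (x:ℝ)^i * (1-(x:ℝ))^(m-i)) -
       d i * ((m.choose i : ℝ) * (x:ℝ)^i * (1-(x:ℝ))^(m-i))|
      ≤ M * ((m.choose i : ℝ) * (x:ℝ)^i * (1-(x:ℝ))^(m-i)) := by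
    intro i hi
    rw [← sub_mul, abs_mul, abs_of_nonneg (basis_nonneg m i x)]
    exact mul_le_mul_of_nonneg_right (h i hi) (basis_nonneg m i x)
  refine (Finset.sum_le_sum hb).trans ?_
  rw [← Finset.mul_sum, basis_sum m x, mul_one]

lemma BA_eq (m : ℕ) (f : C(↥unitInterval, ℝ)) (x : ↥unitInterval) (c : ℕ → ℝ)
    (hc : ∀ k : Fin (m+1), c k = f (bernstein.z k)) :
    (bernsteinApproximation m f) x
      = ∑ i ∈ Finset.range (m+1), c i * ((m.choose i : ℝ) * (x:ℝ)^i * (1-(x:ℝ))^(m-i)) := by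
  rw [bernsteinApproximation.apply]
  rw [← Fin.sum_univ_eq_sum_range (fun i => c i * ((m.choose i : ℝ) * (x:ℝ)^i * (1-(x:ℝ))^(m-i))) (m+1)]
  apply Finset.sum_congr rfl
  intro k _
  rw [hc k, bernstein_apply, smul_eq_mul, mul_comm]

lemma mvt_aux (F F' : ℝ → ℝ)
    (hF : ∀ t ∈ Icc (0:ℝ) 1, HasDerivWithinAt F (F' t) (Icc (0:ℝ) 1) t)
    {p q : ℝ} (h0 : 0 ≤ p) (hpq : p < q) (h1 : q ≤ 1) :
    ∃ ξ ∈ Ioo p q, F q - F p = (q - p) * F' ξ := by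
  have hsub : Icc p q ⊆ Icc (0:ℝ) 1 := Icc_subset_Icc h0 h1
  have hc : ContinuousOn F (Icc p q) :=
    fun t ht => ((hF t (hsub ht)).continuousWithinAt).mono hsub
  have hd : ∀ x ∈ Ioo p q, HasDerivAt F (F' x) x := by
    intro x hx
    have hx01 : x ∈ Ioo (0:ℝ) 1 := ⟨lt_of_le_of_lt h0 hx.1, lt_of_lt_of_le hx.2 h1⟩
    exact (hF x (Ioo_subset_Icc_self hx01)).hasDerivAt (Icc_mem_nhds hx01.1 hx01.2)
  obtain ⟨c, hcm, he⟩ := exists_hasDerivAt_eq_slope F F' hpq hc hd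
  refine ⟨c, hcm, ?_⟩
  rw [he, mul_comm]
  exact (div_mul_cancel₀ _ (sub_ne_zero.mpr hpq.ne')).symm

set_option maxHeartbeats 2000000 in
/-- Every `C¹` function on `[0,1]` with `F'(0) ≥ 0`, `F'(1) ≤ 0` and `F'` decreasing
can be approximated, in the norm `‖·‖_∞ + ‖(·)'‖_∞`, by a Bernstein polynomial with
strictly-increasing-then-decreasing concave coefficients. -/
theorem concave_bernstein_dense (F F' : ℝ → ℝ)
    (hF : ∀ t ∈ Icc (0:ℝ) 1, HasDerivWithinAt F (F' t) (Icc (0:ℝ) 1) t)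
    (hF'c : ContinuousOn F' (Icc (0:ℝ) 1))
    (hF'0 : 0 ≤ F' 0) (hF'1 : F' 1 ≤ 0)
    (hF'dec : AntitoneOn F' (Icc (0:ℝ) 1)) :
    ∀ ε : ℝ, 0 < ε →
      ∃ (n : ℕ) (a : ℕ → ℝ), 2 ≤ n ∧
        0 < a 1 - a 0 ∧ a n - a (n-1) < 0 ∧
        (∀ i, 1 ≤ i → i ≤ n - 1 → a (i+1) + a (i-1) ≤ 2 * a i) ∧
        (⨆ t : Icc (0:ℝ) 1,
            |(∑ i ∈ Finset.range (n+1),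
                a i * (n.choose i : ℝ) * (t:ℝ) ^ i * (1 - (t:ℝ)) ^ (n - i)) - F t|)
          + (⨆ t : Icc (0:ℝ) 1,
              |deriv (fun s : ℝ => ∑ i ∈ Finset.range (n+1),
                  a i * (n.choose i : ℝ) * s ^ i * (1 - s) ^ (n - i)) t - F' t|)
          < ε := by
  intro ε hε
  set ε₀ : ℝ := ε/32 with hε₀def
  set η : ℝ := ε/8 with hηdef
  have hε₀ : 0 < ε₀ := by positivity
  have hη : 0 < η := by positivity
  have hFc : ContinuousOn F (Icc (0:ℝ) 1) := fun t ht => (hF t ht).continuousWithinAt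
  set f : C(↥unitInterval, ℝ) := ⟨unitInterval.restrict F, hFc.restrict⟩ with hfdef
  set f' : C(↥unitInterval, ℝ) := ⟨unitInterval.restrict F', hF'c.restrict⟩ with hf'def
  -- uniform continuity of F'
  obtain ⟨δ, hδpos, hδ⟩ := Metric.uniformContinuousOn_iff.mp
    ((isCompact_Icc).uniformContinuousOn_of_continuous hF'c) ε₀ hε₀
  -- Bernstein approximation bounds
  obtain ⟨N₁, hN₁⟩ := Metric.tendsto_atTop.mp (bernsteinApproximation_uniform f) ε₀ hε₀
  obtain ⟨N₂, hN₂⟩ := Metric.tendsto_atTop.mp (bernsteinApproximation_uniform f') ε₀ hε₀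
  set n : ℕ := max (max N₁ (N₂+1)) (max 2 (⌈1/δ⌉₊ + 1)) with hndef
  have hn2 : 2 ≤ n := le_trans (le_max_left 2 _) (le_max_right _ _)
  have hn1 : 1 ≤ n := le_trans one_le_two hn2
  have hnN1 : N₁ ≤ n := le_trans (le_max_left _ _) (le_max_left _ _)
  have hnN2 : N₂ ≤ n - 1 := by
    have : N₂ + 1 ≤ n := le_trans (le_max_right N₁ _) (le_max_left _ _)
    omega
  have hnR : (0:ℝ) < n := by exact_mod_cast hn1
  have hnne : (n:ℝ) ≠ 0 := ne_of_gt hnR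
  have hnδ : 1/(n:ℝ) < δ := by
    have h1 : (⌈1/δ⌉₊ + 1 : ℕ) ≤ n := le_trans (le_max_right 2 _) (le_max_right _ _)
    have h2 : (1:ℝ)/δ < n := by
      calc (1:ℝ)/δ ≤ ⌈1/δ⌉₊ := Nat.le_ceil _
        _ < (⌈1/δ⌉₊ + 1 : ℕ) := by exact_mod_cast Nat.lt_succ_self _
        _ ≤ n := by exact_mod_cast h1
    have h3 : 1 < (n:ℝ) * δ := by
      rw [div_lt_iff₀ hδpos] at h2; linarith
    rw [div_lt_iff₀ hnR]; linarith
  set a : ℕ → ℝ := fun i => F ((i:ℝ)/n) + η * ((i:ℝ)/n) * (1 - (i:ℝ)/n) with hadef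
  -- mean value slopes
  have slope : ∀ i : ℕ, i < n → ∃ ξ ∈ Ioo ((i:ℝ)/n) (((i:ℝ)+1)/n),
      F (((i:ℝ)+1)/n) - F ((i:ℝ)/n) = (1/n) * F' ξ := by
    intro i hi
    have h0 : (0:ℝ) ≤ (i:ℝ)/n := by positivity
    have hpq : (i:ℝ)/n < ((i:ℝ)+1)/n := by
      gcongr
      exact lt_add_one _
    have h1 : ((i:ℝ)+1)/n ≤ 1 := by
      rw [div_le_one hnR]
      have : (i:ℝ)+1 ≤ n := by exact_mod_cast Nat.succ_le_of_lt hi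
      linarith
    obtain ⟨ξ, hξ, he⟩ := mvt_aux F F' hF h0 hpq h1
    refine ⟨ξ, hξ, ?_⟩
    rw [he]
    congr 1
    field_simp
    ring
  
  have hcast : ((n-1:ℕ):ℝ) = (n:ℝ) - 1 := by
    push_cast [Nat.cast_sub hn1]; ring
  have hn1R : (0:ℝ) < ((n-1:ℕ):ℝ) := by
    rw [hcast]
    have : (2:ℝ) ≤ n := by exact_mod_cast hn2
    linarith
  have hhalf : 1/(n:ℝ) ≤ 1/2 := by
    rw [div_le_div_iff₀ hnR two_pos]
    have : (2:ℝ) ≤ n := by exact_mod_cast hn2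
    linarith
  -- coefficient bound for the derivative comparison
  have coefbd : ∀ i : ℕ, i < n →
      |(n:ℝ) * (a (i+1) - a i) - F' ((i:ℝ)/((n-1:ℕ):ℝ))| ≤ ε₀ + η := by
    intro i hi
    obtain ⟨ξ, hξ, he⟩ := slope i hi
    set y : ℝ := (i:ℝ)/((n-1:ℕ):ℝ) with hydef
    have hiR : (i:ℝ) ≤ (n:ℝ) - 1 := by
      have : (i:ℝ) + 1 ≤ n := by exact_mod_cast Nat.succ_le_of_lt hi
      linarith
    have hi0 : (0:ℝ) ≤ (i:ℝ) := Nat.cast_nonneg i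
    have hy0 : 0 ≤ y := by positivity
    have hy1 : y ≤ 1 := by
      rw [hydef, div_le_one hn1R, hcast]; exact hiR
    have hylow : (i:ℝ)/n ≤ y := by
      rw [hydef, div_le_div_iff₀ hnR hn1R, hcast]
      nlinarith
    have hyhigh : y ≤ ((i:ℝ)+1)/n := by
      rw [hydef, div_le_div_iff₀ hn1R hnR, hcast]
      nlinarith
    have hlen : ((i:ℝ)+1)/n = (i:ℝ)/n + 1/n := by ring
    have hξmem : ξ ∈ Icc (0:ℝ) 1 := by
      constructor
      · have : (0:ℝ) ≤ (i:ℝ)/n := by positivity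
        linarith [hξ.1]
      · have : ((i:ℝ)+1)/n ≤ 1 := by
          rw [div_le_one hnR]
          have : (i:ℝ) + 1 ≤ n := by exact_mod_cast Nat.succ_le_of_lt hi
          linarith
        linarith [hξ.2]
    have hdist : dist ξ y < δ := by
      rw [Real.dist_eq]
      have hy2 : y ≤ (i:ℝ)/n + 1/n := hlen ▸ hyhigh
      have hξ2 : ξ < (i:ℝ)/n + 1/n := hlen ▸ hξ.2
      have h1 : |ξ - y| < 1/n := by
        rw [abs_lt]
        exact ⟨by linarith [hξ.1], by linarith [hylow]⟩
      linarith [hnδ]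
    have hFdiff : |F' ξ - F' y| < ε₀ := by
      have := hδ ξ hξmem y ⟨hy0, hy1⟩ hdist
      rwa [Real.dist_eq] at this
    have hg : (n:ℝ) * (η * (((i:ℝ)+1)/n) * (1 - ((i:ℝ)+1)/n) - η * ((i:ℝ)/n) * (1 - (i:ℝ)/n))
        = η * (1 - (2*(i:ℝ)+1)/n) := by
      field_simp
      ring
    have hgoal : (n:ℝ)*(a (i+1) - a i)
        = (n:ℝ)*(F (((i:ℝ)+1)/n) - F ((i:ℝ)/n)) + η * (1 - (2*(i:ℝ)+1)/n) := by
      simp only [hadef]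
      push_cast
      linear_combination hg
    rw [he] at hgoal
    have hsimp : (n:ℝ)*((1/n) * F' ξ) = F' ξ := by field_simp
    rw [hsimp] at hgoal
    have hwbd : |η * (1 - (2*(i:ℝ)+1)/n)| ≤ η := by
      rw [abs_mul, abs_of_pos hη]
      have hub : (2*(i:ℝ)+1)/n ≤ 2 := by
        rw [div_le_iff₀ hnR]; nlinarith
      have hlb : 0 ≤ (2*(i:ℝ)+1)/n := by positivity
      have : |1 - (2*(i:ℝ)+1)/n| ≤ 1 := by
        rw [abs_le]; constructor <;> linarith
      nlinarith [abs_nonneg (1 - (2*(i:ℝ)+1)/n)]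
    calc |(n:ℝ) * (a (i+1) - a i) - F' y|
        = |(F' ξ - F' y) + η * (1 - (2*(i:ℝ)+1)/n)| := by rw [hgoal]; ring_nf
      _ ≤ |F' ξ - F' y| + |η * (1 - (2*(i:ℝ)+1)/n)| := abs_add_le _ _
      _ ≤ ε₀ + η := add_le_add hFdiff.le hwbd
  
  have hsp : ε₀ < η/2 := by rw [hε₀def, hηdef]; linarith
  have h1n : (0:ℝ) < 1/(n:ℝ) := by positivity
  -- strictly increasing at the left end
  have hend1 : 0 < a 1 - a 0 := by
    obtain ⟨ξ, hξ, he⟩ := slope 0 (by omega)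
    simp only [Nat.cast_zero, zero_add, zero_div] at hξ he
    have hξmem : ξ ∈ Icc (0:ℝ) 1 := ⟨hξ.1.le, by nlinarith [hξ.2, hhalf]⟩
    have hdist : dist ξ (0:ℝ) < δ := by
      rw [Real.dist_eq, sub_zero, abs_of_nonneg hξ.1.le]; linarith [hξ.2, hnδ]
    have hFd : |F' ξ - F' 0| < ε₀ := by
      have := hδ ξ hξmem 0 (by norm_num) hdist
      rwa [Real.dist_eq] at this
    have hFξ : -ε₀ < F' ξ := by
      have h := (abs_lt.mp hFd).1
      linarith
    have ha0 : a 0 = F 0 := by simp [hadef]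
    have ha1 : a 1 = F (1/n) + η * (1/n) * (1 - 1/n) := by
      simp only [hadef, Nat.cast_one]
    rw [ha0, ha1]
    nlinarith [he, hFξ, h1n, hhalf, hη, hsp, mul_pos h1n (show (0:ℝ) < F' ξ + ε₀ by linarith),
      mul_nonneg (mul_pos hη h1n).le (show (0:ℝ) ≤ 1/2 - 1/(n:ℝ) by linarith),
      mul_pos h1n (show (0:ℝ) < η/2 - ε₀ by linarith)]
  -- strictly decreasing at the right end
  have hend2 : a n - a (n-1) < 0 := by
    obtain ⟨ξ, hξ, he⟩ := slope (n-1) (by omega)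
    rw [hcast] at hξ he
    have hone : ((n:ℝ) - 1 + 1)/n = 1 := by field_simp; ring
    rw [hone] at hξ he
    have heq1n : ((n:ℝ)-1)/n = 1 - 1/n := by field_simp
    have hξmem : ξ ∈ Icc (0:ℝ) 1 := by
      constructor
      · have : (0:ℝ) ≤ ((n:ℝ)-1)/n := by
          apply div_nonneg _ hnR.le
          have : (1:ℝ) ≤ n := by exact_mod_cast hn1
          linarith
        linarith [hξ.1]
      · exact hξ.2.le
    have hdist : dist ξ (1:ℝ) < δ := by
      rw [Real.dist_eq, abs_of_nonpos (by linarith [hξ.2])]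
      have := hξ.1
      rw [heq1n] at this
      linarith [hnδ]
    have hFd : |F' ξ - F' 1| < ε₀ := by
      have := hδ ξ hξmem 1 (by norm_num) hdist
      rwa [Real.dist_eq] at this
    have hFξ : F' ξ < ε₀ := by
      have h := (abs_lt.mp hFd).2
      linarith
    have han : a n = F 1 := by
      simp only [hadef, div_self hnne]
      ring_nf
    have han1 : a (n-1) = F (((n:ℝ)-1)/n) + η * (((n:ℝ)-1)/n) * (1 - ((n:ℝ)-1)/n) := by
      simp only [hadef, hcast]
    rw [heq1n] at he
    rw [han, han1, heq1n]
    nlinarith [he,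
      mul_pos h1n (show (0:ℝ) < ε₀ - F' ξ by linarith),
      mul_pos h1n (show (0:ℝ) < η/2 - ε₀ by linarith),
      mul_nonneg (mul_pos hη h1n).le (show (0:ℝ) ≤ 1/2 - 1/(n:ℝ) by linarith)]
  -- concavity of the coefficients
  have hconc : ∀ i, 1 ≤ i → i ≤ n - 1 → a (i+1) + a (i-1) ≤ 2 * a i := by
    intro i h1i hin
    have hin' : i < n := by omega
    have hi1n : i - 1 < n := by omega
    obtain ⟨ξ₁, hξ₁, he₁⟩ := slope (i-1) hi1n
    obtain ⟨ξ₂, hξ₂, he₂⟩ := slope i hin'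
    have hci : ((i-1:ℕ):ℝ) = (i:ℝ) - 1 := by
      push_cast [Nat.cast_sub h1i]; ring
    rw [hci] at hξ₁ he₁
    have hstep : ((i:ℝ) - 1 + 1)/n = (i:ℝ)/n := by ring_nf
    rw [hstep] at hξ₁ he₁
    have hi0 : (0:ℝ) ≤ (i:ℝ) - 1 := by
      have : (1:ℝ) ≤ i := by exact_mod_cast h1i
      linarith
    have hiub : (i:ℝ) + 1 ≤ n := by exact_mod_cast Nat.succ_le_of_lt hin'
    have hξ₁mem : ξ₁ ∈ Icc (0:ℝ) 1 := by
      constructor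
      · have : (0:ℝ) ≤ ((i:ℝ)-1)/n := by positivity
        linarith [hξ₁.1]
      · have : (i:ℝ)/n ≤ 1 := by rw [div_le_one hnR]; linarith
        linarith [hξ₁.2]
    have hξ₂mem : ξ₂ ∈ Icc (0:ℝ) 1 := by
      constructor
      · have : (0:ℝ) ≤ (i:ℝ)/n := by positivity
        linarith [hξ₂.1]
      · have : ((i:ℝ)+1)/n ≤ 1 := by rw [div_le_one hnR]; linarith
        linarith [hξ₂.2]
    have hle : ξ₁ ≤ ξ₂ := le_of_lt (lt_trans hξ₁.2 hξ₂.1)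
    have hdec := hF'dec hξ₁mem hξ₂mem hle
    have hg : η * (((i:ℝ)+1)/n) * (1 - ((i:ℝ)+1)/n) + η * (((i:ℝ)-1)/n) * (1 - ((i:ℝ)-1)/n)
        - 2 * (η * ((i:ℝ)/n) * (1 - (i:ℝ)/n)) = -2*η*(1/(n:ℝ))*(1/(n:ℝ)) := by
      field_simp
      ring
    have hF2 : F (((i:ℝ)+1)/n) = F ((i:ℝ)/n) + 1/(n:ℝ) * F' ξ₂ := by linarith [he₂]
    have hF1 : F (((i:ℝ)-1)/n) = F ((i:ℝ)/n) - 1/(n:ℝ) * F' ξ₁ := by linarith [he₁]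
    simp only [hadef]
    push_cast [Nat.cast_sub h1i]
    rw [hF2, hF1]
    have hd2 : 0 ≤ 1/(n:ℝ) * (F' ξ₁ - F' ξ₂) := mul_nonneg h1n.le (sub_nonneg.mpr hdec)
    have hd3 : (0:ℝ) < η * (1/(n:ℝ)) * (1/(n:ℝ)) := mul_pos (mul_pos hη h1n) h1n
    linarith [hg, hd2, hd3]
  -- sup-norm bounds
  haveI : Nonempty ↥(Icc (0:ℝ) 1) := ⟨⟨0, left_mem_Icc.mpr zero_le_one⟩⟩
  have valbd : ∀ x : ↥unitInterval,
      |(∑ i ∈ Finset.range (n+1), a i * (n.choose i : ℝ) * (x:ℝ)^i * (1-(x:ℝ))^(n-i)) - F (x:ℝ)|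
        ≤ η + ε₀ := by
    intro x
    have hflat : (∑ i ∈ Finset.range (n+1), a i * (n.choose i : ℝ) * (x:ℝ)^i * (1-(x:ℝ))^(n-i))
        = ∑ i ∈ Finset.range (n+1), a i * ((n.choose i : ℝ) * (x:ℝ)^i * (1-(x:ℝ))^(n-i)) :=
      Finset.sum_congr rfl (fun i _ => by ring)
    have hcoef : ∀ i ∈ Finset.range (n+1), |a i - F ((i:ℝ)/n)| ≤ η := by
      intro i hi
      have hiin : (i:ℝ) ≤ n := by exact_mod_cast Nat.lt_succ_iff.mp (Finset.mem_range.mp hi)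
      have hu0 : (0:ℝ) ≤ (i:ℝ)/n := by positivity
      have hu1 : (i:ℝ)/n ≤ 1 := by rw [div_le_one hnR]; exact hiin
      simp only [hadef, add_sub_cancel_left]
      rw [abs_of_nonneg (mul_nonneg (mul_nonneg hη.le hu0) (by linarith))]
      nlinarith [mul_nonneg hη.le (show (0:ℝ) ≤ 1 - (i:ℝ)/n by linarith),
        mul_nonneg hη.le (sq_nonneg ((i:ℝ)/n))]
    have h1 := cmp_sum n x a (fun i => F ((i:ℝ)/n)) η hcoef
    have h2 : (∑ i ∈ Finset.range (n+1), F ((i:ℝ)/n) * ((n.choose i : ℝ) * (x:ℝ)^i * (1-(x:ℝ))^(n-i)))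
        = (bernsteinApproximation n f) x :=
      (BA_eq n f x (fun i => F ((i:ℝ)/n)) (fun k => rfl)).symm
    have h3 : |(bernsteinApproximation n f) x - F (x:ℝ)| ≤ ε₀ := by
      have hd : dist ((bernsteinApproximation n f) x) (f x) ≤ dist (bernsteinApproximation n f) f :=
        ContinuousMap.dist_apply_le_dist x
      rw [Real.dist_eq, (rfl : f x = F (x:ℝ))] at hd
      exact hd.trans (hN₁ n hnN1).le
    have h4 : |(∑ i ∈ Finset.range (n+1), F ((i:ℝ)/n) * ((n.choose i : ℝ) * (x:ℝ)^i * (1-(x:ℝ))^(n-i))) - F (x:ℝ)| ≤ ε₀ := by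
      rw [h2]; exact h3
    rw [hflat]
    exact (abs_sub_le _ _ _).trans (add_le_add h1 h4)
  have derbd : ∀ x : ↥unitInterval,
      |deriv (fun s : ℝ => ∑ i ∈ Finset.range (n+1),
          a i * (n.choose i : ℝ) * s ^ i * (1 - s) ^ (n - i)) (x:ℝ) - F' (x:ℝ)|
        ≤ (ε₀ + η) + ε₀ := by
    intro x
    rw [(bern_hasDerivAt n hn1 a (x:ℝ)).deriv]
    have hm : n - 1 + 1 = n := Nat.sub_add_cancel hn1
    have hflat : (∑ i ∈ Finset.range n,
          (n:ℝ)*(a (i+1)-a i)*((n-1).choose i : ℝ)*(x:ℝ)^i*(1-(x:ℝ))^(n-1-i))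
        = ∑ i ∈ Finset.range ((n-1)+1),
            ((n:ℝ)*(a (i+1)-a i)) * (((n-1).choose i : ℝ)*(x:ℝ)^i*(1-(x:ℝ))^((n-1)-i)) := by
      rw [hm]
      exact Finset.sum_congr rfl (fun i _ => by ring)
    rw [hflat]
    have hcoef : ∀ i ∈ Finset.range ((n-1)+1),
        |(n:ℝ)*(a (i+1)-a i) - F' ((i:ℝ)/((n-1:ℕ):ℝ))| ≤ ε₀ + η := by
      intro i hi
      exact coefbd i (by have := Finset.mem_range.mp hi; omega)
    have h1 := cmp_sum (n-1) x (fun i => (n:ℝ)*(a (i+1)-a i))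
      (fun i => F' ((i:ℝ)/((n-1:ℕ):ℝ))) (ε₀+η) hcoef
    have h2 : (∑ i ∈ Finset.range ((n-1)+1),
          F' ((i:ℝ)/((n-1:ℕ):ℝ)) * (((n-1).choose i : ℝ)*(x:ℝ)^i*(1-(x:ℝ))^((n-1)-i)))
        = (bernsteinApproximation (n-1) f') x :=
      (BA_eq (n-1) f' x (fun i => F' ((i:ℝ)/((n-1:ℕ):ℝ))) (fun k => rfl)).symm
    have h3 : |(bernsteinApproximation (n-1) f') x - F' (x:ℝ)| ≤ ε₀ := by
      have hd : dist ((bernsteinApproximation (n-1) f') x) (f' x)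
          ≤ dist (bernsteinApproximation (n-1) f') f' :=
        ContinuousMap.dist_apply_le_dist x
      rw [Real.dist_eq, (rfl : f' x = F' (x:ℝ))] at hd
      exact hd.trans (hN₂ (n-1) hnN2).le
    have h4 : |(∑ i ∈ Finset.range ((n-1)+1),
          F' ((i:ℝ)/((n-1:ℕ):ℝ)) * (((n-1).choose i : ℝ)*(x:ℝ)^i*(1-(x:ℝ))^((n-1)-i))) - F' (x:ℝ)| ≤ ε₀ := by
      rw [h2]; exact h3
    exact (abs_sub_le _ _ _).trans (add_le_add h1 h4)
  refine ⟨n, a, hn2, hend1, hend2, hconc, ?_⟩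
  have s1 : (⨆ t : Icc (0:ℝ) 1,
      |(∑ i ∈ Finset.range (n+1),
          a i * (n.choose i : ℝ) * (t:ℝ) ^ i * (1 - (t:ℝ)) ^ (n - i)) - F t|) ≤ η + ε₀ :=
    ciSup_le (fun t => valbd t)
  have s2 : (⨆ t : Icc (0:ℝ) 1,
      |deriv (fun s : ℝ => ∑ i ∈ Finset.range (n+1),
          a i * (n.choose i : ℝ) * s ^ i * (1 - s) ^ (n - i)) t - F' t|) ≤ (ε₀ + η) + ε₀ :=
    ciSup_le (fun t => derbd t)
  have hfin : (η + ε₀) + ((ε₀ + η) + ε₀) < ε := by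
    rw [hηdef, hε₀def]; linarith
  exact lt_of_le_of_lt (add_le_add s1 s2) hfin
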